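/- Let F be a field of characteristic zero and k ≥ 1 a natural number. Let V' ⊆ V be an inclusion of F-vector spaces, ι : W' → W an injective linear map of F-vector spaces, and μ : V × V → W, μ' : V' × V' → W' symmetric bilinear maps satisfying ι(μ'(u, v)) = μ(u, v) for all u, v ∈ V'. Let δ₁ : ⋀^{k+1} V → (⋀^k V) ⊗ V and δ₁' : ⋀^{k+1} V' → (⋀^k V') ⊗ V' be the Koszul differentials, and let δ₂ : (⋀^k V) ⊗ V → (⋀^{k−1} V) ⊗ W and δ₂' : (⋀^k V') ⊗ V' → (⋀^{k−1} V') ⊗ W' be the linear maps determined by δ₂((v₁ ∧ ⋯ ∧ v_k) ⊗ u) = Σ_{i=1}^{k} (−1)^{k−i} (v₁ ∧ ⋯ ∧ v̂_i ∧ ⋯ ∧ v_k) ⊗ μ(v_i, u) (and similarly for δ₂' using μ'). Define the Koszul cohomology groups K' = ker δ₂' / range δ₁' and K = ker δ₂ / range δ₁. Then the inclusion V' ⊆ V and the map ι induce a well-defined linear map K' → K, and this map is injective. -/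

import Mathlib

open TensorProduct

/-- The `n`-th exterior power `⋀^n V` of an `F`-vector space `V` (the degree-`n` part
of the exterior algebra of `V`). -/
def ExtPower (F : Type*) [Field F] (n : ℕ) (V : Type*) [AddCommGroup V] [Module F V] :
    Type _ := ↥(⋀[F]^n V)

noncomputable instance (F : Type*) [Field F] (n : ℕ) (V : Type*) [AddCommGroup V]
    [Module F V] : AddCommGroup (ExtPower F n V) :=
  inferInstanceAs (AddCommGroup ↥(⋀[F]^n V))

noncomputable instance (F : Type*) [Field F] (n : ℕ) (V : Type*) [AddCommGroup V]
    [Module F V] : Module F (ExtPower F n V) :=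
  inferInstanceAs (Module F ↥(⋀[F]^n V))

/-- The wedge product `v₀ ∧ ⋯ ∧ v_{n-1} ∈ ⋀^n V` of an `n`-tuple of vectors of `V`. -/
noncomputable def wedge (F : Type*) [Field F] {V : Type*} [AddCommGroup V] [Module F V]
    (n : ℕ) (v : Fin n → V) : ExtPower F n V :=
  ⟨ExteriorAlgebra.ιMulti F n v, ExteriorAlgebra.ιMulti_range F n (Set.mem_range_self v)⟩

section Aux

variable {F : Type*} [Field F] {V V' P : Type*} [AddCommGroup V] [Module F V]
  [AddCommGroup V'] [Module F V'] [AddCommGroup P] [Module F P]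

lemma wedge_span (n : ℕ) :
    Submodule.span F (Set.range (wedge F n (V := V))) = ⊤ := by
  rw [Submodule.eq_top_iff']
  intro x
  have hx' : (show ↥(⋀[F]^n V) from x).1 ∈
      Submodule.span F (Set.range (ExteriorAlgebra.ιMulti F n (M := V))) := by
    rw [ExteriorAlgebra.ιMulti_span_fixedDegree]; exact (show ↥(⋀[F]^n V) from x).2
  have key : ∀ y, y ∈ Submodule.span F (Set.range (ExteriorAlgebra.ιMulti F n (M := V))) →
      ∀ (hmem : y ∈ ⋀[F]^n V),
        (⟨y, hmem⟩ : ExtPower F n V) ∈ Submodule.span F (Set.range (wedge F n)) := by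
    intro y hy
    induction hy using Submodule.span_induction with
    | mem z hz =>
        obtain ⟨v, rfl⟩ := hz
        intro hmem
        exact Submodule.subset_span ⟨v, rfl⟩
    | zero =>
        intro hmem
        have : (⟨0, hmem⟩ : ExtPower F n V) = 0 := Subtype.ext rfl
        rw [this]; exact Submodule.zero_mem _
    | add a b ha hb iha ihb =>
        intro hmem
        have ha' : a ∈ ⋀[F]^n V := by
          rwa [← ExteriorAlgebra.ιMulti_span_fixedDegree]
        have hb' : b ∈ ⋀[F]^n V := by
          rwa [← ExteriorAlgebra.ιMulti_span_fixedDegree]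
        have : (⟨a + b, hmem⟩ : ExtPower F n V) = ⟨a, ha'⟩ + ⟨b, hb'⟩ := Subtype.ext rfl
        rw [this]
        exact Submodule.add_mem _ (iha ha') (ihb hb')
    | smul c a ha iha =>
        intro hmem
        have ha' : a ∈ ⋀[F]^n V := by
          rwa [← ExteriorAlgebra.ιMulti_span_fixedDegree]
        have : (⟨c • a, hmem⟩ : ExtPower F n V) = c • (⟨a, ha'⟩ : ExtPower F n V) :=
          Subtype.ext rfl
        rw [this]
        exact Submodule.smul_mem _ _ (iha ha')
  exact key _ hx' (show ↥(⋀[F]^n V) from x).2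

lemma extPower_hom_ext {n : ℕ} {f g : ExtPower F n V →ₗ[F] P}
    (h : ∀ v : Fin n → V, f (wedge F n v) = g (wedge F n v)) : f = g := by
  apply LinearMap.ext_on (wedge_span n)
  rintro _ ⟨v, rfl⟩
  exact h v

noncomputable def emap (n : ℕ) (f : V' →ₗ[F] V) : ExtPower F n V' →ₗ[F] ExtPower F n V :=
  (ExteriorAlgebra.map f).toLinearMap.restrict (p := ⋀[F]^n V') (q := ⋀[F]^n V)
    (by
      intro x hx
      rw [← ExteriorAlgebra.ιMulti_span_fixedDegree] at hx
      induction hx using Submodule.span_induction with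
      | mem y hy =>
          obtain ⟨v, rfl⟩ := hy
          rw [AlgHom.toLinearMap_apply, ExteriorAlgebra.map_apply_ιMulti]
          exact ExteriorAlgebra.ιMulti_range F n (Set.mem_range_self _)
      | zero => simpa using Submodule.zero_mem _
      | add a b _ _ iha ihb => rw [map_add]; exact Submodule.add_mem _ iha ihb
      | smul c a _ iha => rw [map_smul]; exact Submodule.smul_mem _ _ iha)

lemma emap_wedge (n : ℕ) (f : V' →ₗ[F] V) (v : Fin n → V') :
    emap n f (wedge F n v) = wedge F n (fun l => f (v l)) := by
  apply Subtype.ext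
  show (ExteriorAlgebra.map f).toLinearMap (ExteriorAlgebra.ιMulti F n v) = _
  rw [AlgHom.toLinearMap_apply, ExteriorAlgebra.map_apply_ιMulti]
  rfl

lemma emap_id (n : ℕ) : emap n (LinearMap.id : V →ₗ[F] V) = LinearMap.id := by
  apply extPower_hom_ext
  intro v
  rw [emap_wedge]
  rfl

end Aux

/-- Let `j : V' → V` be an inclusion of `F`-vector spaces (`char F = 0`),
`ι : W' → W` an injective linear map, and `μ, μ'` compatible symmetric bilinear maps.
With `k = n + 1 ≥ 1`, let `δ₁, δ₂` (resp. `δ₁', δ₂'`) be the Koszul differentials for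
`(V, μ)` (resp. `(V', μ')`), and let `K = ker δ₂ / range δ₁`, `K' = ker δ₂' / range δ₁'`
be the Koszul cohomology groups.  Then `j₂ = (⋀^k j) ⊗ j` carries `ker δ₂'` into `ker δ₂`,
inducing a well-defined linear map `K' → K`, and this map is injective. -/
theorem koszul_cohomology_map_injective (F : Type*) [Field F] [CharZero F]
    (V' V W' W : Type*) [AddCommGroup V'] [Module F V'] [AddCommGroup V] [Module F V]
    [AddCommGroup W'] [Module F W'] [AddCommGroup W] [Module F W]
    (j : V' →ₗ[F] V) (hj : Function.Injective j)
    (ι : W' →ₗ[F] W) (hι : Function.Injective ι)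
    (μ : V →ₗ[F] V →ₗ[F] W) (hμ : ∀ u v : V, μ u v = μ v u)
    (μ' : V' →ₗ[F] V' →ₗ[F] W') (hμ' : ∀ u v : V', μ' u v = μ' v u)
    (hcompat : ∀ u v : V', ι (μ' u v) = μ (j u) (j v))
    (n : ℕ)
    -- Koszul differentials for `V` (with `k = n + 1`)
    (δ₁ : (ExtPower F (n+2) V) →ₗ[F] (ExtPower F (n+1) V) ⊗[F] V)
    (hδ₁ : ∀ v : Fin (n+2) → V,
      δ₁ (wedge F (n+2) v) =
        ∑ i : Fin (n+2), ((-1 : F) ^ (n + 1 - (i : ℕ))) •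
          (wedge F (n+1) (fun l => v (i.succAbove l)) ⊗ₜ[F] v i))
    (δ₂ : ((ExtPower F (n+1) V) ⊗[F] V) →ₗ[F] (ExtPower F n V) ⊗[F] W)
    (hδ₂ : ∀ (v : Fin (n+1) → V) (u : V),
      δ₂ (wedge F (n+1) v ⊗ₜ[F] u) =
        ∑ i : Fin (n+1), ((-1 : F) ^ (n - (i : ℕ))) •
          (wedge F n (fun l => v (i.succAbove l)) ⊗ₜ[F] (μ (v i) u)))
    -- Koszul differentials for `V'` (with `k = n + 1`)
    (δ₁' : (ExtPower F (n+2) V') →ₗ[F] (ExtPower F (n+1) V') ⊗[F] V')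
    (hδ₁' : ∀ v : Fin (n+2) → V',
      δ₁' (wedge F (n+2) v) =
        ∑ i : Fin (n+2), ((-1 : F) ^ (n + 1 - (i : ℕ))) •
          (wedge F (n+1) (fun l => v (i.succAbove l)) ⊗ₜ[F] v i))
    (δ₂' : ((ExtPower F (n+1) V') ⊗[F] V') →ₗ[F] (ExtPower F n V') ⊗[F] W')
    (hδ₂' : ∀ (v : Fin (n+1) → V') (u : V'),
      δ₂' (wedge F (n+1) v ⊗ₜ[F] u) =
        ∑ i : Fin (n+1), ((-1 : F) ^ (n - (i : ℕ))) •
          (wedge F n (fun l => v (i.succAbove l)) ⊗ₜ[F] (μ' (v i) u)))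
    -- the map `⋀^{n+1} V' → ⋀^{n+1} V` induced by `j`
    (jk : (ExtPower F (n+1) V') →ₗ[F] ExtPower F (n+1) V)
    (hjk : ∀ v : Fin (n+1) → V',
      jk (wedge F (n+1) v) = wedge F (n+1) (fun l => j (v l))) :
    (∀ x ∈ LinearMap.ker δ₂',
        TensorProduct.map jk j x ∈ LinearMap.ker δ₂) ∧
    ∃ φ : (↥(LinearMap.ker δ₂') ⧸
            Submodule.comap (LinearMap.ker δ₂').subtype (LinearMap.range δ₁')) →ₗ[F]
          (↥(LinearMap.ker δ₂) ⧸
            Submodule.comap (LinearMap.ker δ₂).subtype (LinearMap.range δ₁)),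
      (∀ (x : LinearMap.ker δ₂')
          (hx : TensorProduct.map jk j (x : (ExtPower F (n+1) V') ⊗[F] V')
                  ∈ LinearMap.ker δ₂),
        φ (Submodule.Quotient.mk x) =
          Submodule.Quotient.mk
            ⟨TensorProduct.map jk j (x : (ExtPower F (n+1) V') ⊗[F] V'), hx⟩) ∧
      Function.Injective φ := by

  classical
  obtain ⟨p, hp⟩ := j.exists_leftInverse_of_injective (LinearMap.ker_eq_bot.mpr hj)
  have hpj : ∀ x : V', p (j x) = x := fun x => LinearMap.ext_iff.mp hp x
  set jn : ExtPower F n V' →ₗ[F] ExtPower F n V := emap n j with hjn_def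
  set jk2 : ExtPower F (n+2) V' →ₗ[F] ExtPower F (n+2) V := emap (n+2) j with hjk2_def
  set pk1 : ExtPower F (n+1) V →ₗ[F] ExtPower F (n+1) V' := emap (n+1) p with hpk1_def
  set pk2 : ExtPower F (n+2) V →ₗ[F] ExtPower F (n+2) V' := emap (n+2) p with hpk2_def
  -- δ₂ ∘ (jk ⊗ j) = (jn ⊗ ι) ∘ δ₂'
  have h1 : δ₂ ∘ₗ TensorProduct.map jk j = (TensorProduct.map jn ι) ∘ₗ δ₂' := by
    apply TensorProduct.ext
    apply extPower_hom_ext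
    intro v
    apply LinearMap.ext
    intro u
    simp only [LinearMap.compr₂_apply, LinearMap.compr₂ₛₗ_apply, TensorProduct.mk_apply, LinearMap.comp_apply,
      TensorProduct.map_tmul]
    rw [hjk, hδ₂ (fun l => j (v l)) (j u), hδ₂' v u, map_sum]
    refine Finset.sum_congr rfl fun i _ => ?_
    rw [map_smul, TensorProduct.map_tmul, hjn_def, emap_wedge, hcompat]
  -- (jk ⊗ j) ∘ δ₁' = δ₁ ∘ jk2
  have h4 : TensorProduct.map jk j ∘ₗ δ₁' = δ₁ ∘ₗ jk2 := by
    apply extPower_hom_ext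
    intro v
    simp only [LinearMap.comp_apply]
    rw [hδ₁' v, map_sum, hjk2_def, emap_wedge, hδ₁ (fun l => j (v l))]
    refine Finset.sum_congr rfl fun i _ => ?_
    rw [map_smul, TensorProduct.map_tmul, hjk]
  -- (pk1 ⊗ p) ∘ δ₁ = δ₁' ∘ pk2
  have h2 : TensorProduct.map pk1 p ∘ₗ δ₁ = δ₁' ∘ₗ pk2 := by
    apply extPower_hom_ext
    intro v
    simp only [LinearMap.comp_apply]
    rw [hδ₁ v, map_sum, hpk2_def, emap_wedge, hδ₁' (fun l => p (v l))]
    refine Finset.sum_congr rfl fun i _ => ?_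
    rw [map_smul, TensorProduct.map_tmul, hpk1_def, emap_wedge]
  -- (pk1 ⊗ p) ∘ (jk ⊗ j) = id
  have h3 : ∀ z : (ExtPower F (n+1) V') ⊗[F] V',
      TensorProduct.map pk1 p (TensorProduct.map jk j z) = z := by
    have hcomp : pk1 ∘ₗ jk = LinearMap.id := by
      apply extPower_hom_ext
      intro v
      rw [LinearMap.comp_apply, hjk, hpk1_def, emap_wedge]
      simp only [hpj]
      rfl
    intro z
    rw [← LinearMap.comp_apply, ← TensorProduct.map_comp, hcomp, hp, TensorProduct.map_id,
      LinearMap.id_apply]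
  -- j₂ preserves kernels
  have hker : ∀ x ∈ LinearMap.ker δ₂', TensorProduct.map jk j x ∈ LinearMap.ker δ₂ := by
    intro x hx
    rw [LinearMap.mem_ker] at hx ⊢
    rw [← LinearMap.comp_apply, h1, LinearMap.comp_apply, hx, map_zero]
  -- injectivity on ranges
  have hinj : ∀ x : (ExtPower F (n+1) V') ⊗[F] V',
      TensorProduct.map jk j x ∈ LinearMap.range δ₁ → x ∈ LinearMap.range δ₁' := by
    intro x hx
    obtain ⟨y, hy⟩ := hx
    refine ⟨pk2 y, ?_⟩
    rw [← LinearMap.comp_apply, ← h2, LinearMap.comp_apply, hy, h3]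
  set S' : Submodule F (LinearMap.ker δ₂') :=
    Submodule.comap (LinearMap.ker δ₂').subtype (LinearMap.range δ₁') with hS'
  set S : Submodule F (LinearMap.ker δ₂) :=
    Submodule.comap (LinearMap.ker δ₂).subtype (LinearMap.range δ₁) with hS
  set ψ : ↥(LinearMap.ker δ₂') →ₗ[F] ↥(LinearMap.ker δ₂) :=
    LinearMap.codRestrict (LinearMap.ker δ₂)
      ((TensorProduct.map jk j) ∘ₗ (LinearMap.ker δ₂').subtype)
      (fun x => hker x.1 x.2) with hψ
  have hle : S' ≤ S.comap ψ := by
    intro x hx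
    simp only [hS', Submodule.mem_comap] at hx
    obtain ⟨z, hz⟩ := hx
    simp only [hS, Submodule.mem_comap, hψ]
    refine ⟨jk2 z, ?_⟩
    show δ₁ (jk2 z) = TensorProduct.map jk j x.1
    rw [← LinearMap.comp_apply, ← h4, LinearMap.comp_apply, hz]
    rfl
  refine ⟨hker, Submodule.mapQ S' S ψ hle, ?_, ?_⟩
  · intro x hx
    rw [Submodule.mapQ_apply]
    exact congrArg _ (Subtype.ext rfl)
  · rw [← LinearMap.ker_eq_bot, Submodule.eq_bot_iff]
    intro a ha
    obtain ⟨x, rfl⟩ := Submodule.Quotient.mk_surjective S' a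
    rw [LinearMap.mem_ker, Submodule.mapQ_apply, Submodule.Quotient.mk_eq_zero] at ha
    rw [Submodule.Quotient.mk_eq_zero]
    simp only [hS, Submodule.mem_comap] at ha
    simp only [hS', Submodule.mem_comap]
    exact hinj x.1 ha
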